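/- Let α: ℝ³ → 𝔰𝔩(4,ℝ) be the map with α(x₁,x₂,x₃) having rows (0,x₁,0,0), (x₁,0,0,0), (x₂,−x₂,−x₁,0), (x₃,x₃,−x₁,x₁). Then the two-dimensional subspace 𝔥 = span{E₄₁, E₄₂} of 𝔰𝔩(4,ℝ) is an abelian Lie subalgebra that contains the curvature value [α(x),α(y)] − α([x,y]) for all x,y (where the bracket on ℝ³ is the Heisenberg bracket with [X₁,X₂]=−X₃), and 𝔥 is invariant under ad(α(x)) for every x ∈ ℝ³; explicitly [α(x),E₄₂] = x₁(E₄₂ − E₄₁) and [α(x),E₄₁] = x₁(E₄₁ − E₄₂). -/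

import Mathlib

set_option maxHeartbeats 1000000
open Matrix

noncomputable section

/-- The Heisenberg bracket with [X₁,X₂] = −X₃. -/
def heisBr (x y : Fin 3 → ℝ) : Fin 3 → ℝ := ![0, 0, -(x 0 * y 1 - x 1 * y 0)]

/-- The extension α : 𝔨 → 𝔰𝔩(4,ℝ). -/
def αH (x : Fin 3 → ℝ) : Matrix (Fin 4) (Fin 4) ℝ :=
  !![0, x 0, 0, 0;
     x 0, 0, 0, 0;
     x 1, -(x 1), -(x 0), 0;
     x 2, x 2, -(x 0), x 0]

/-- The elementary matrix E₄₁. -/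
def E41 : Matrix (Fin 4) (Fin 4) ℝ := Matrix.single 3 0 1

/-- The elementary matrix E₄₂. -/
def E42 : Matrix (Fin 4) (Fin 4) ℝ := Matrix.single 3 1 1

/-- The span 𝔥 = ⟨E₄₁, E₄₂⟩. -/
def hol : Submodule ℝ (Matrix (Fin 4) (Fin 4) ℝ) := Submodule.span ℝ {E41, E42}


lemma E41_eq : E41 = !![0,0,0,0; 0,0,0,0; 0,0,0,0; 1,0,0,0] := by
  ext i j
  fin_cases i <;> fin_cases j <;> simp [E41, Matrix.single, Matrix.vecHead, Matrix.vecTail]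

lemma E42_eq : E42 = !![0,0,0,0; 0,0,0,0; 0,0,0,0; 0,1,0,0] := by
  ext i j
  fin_cases i <;> fin_cases j <;> simp [E42, Matrix.single, Matrix.vecHead, Matrix.vecTail]

lemma hol_mem_iff (u : Matrix (Fin 4) (Fin 4) ℝ) :
    u ∈ hol ↔ ∃ a b : ℝ, a • E41 + b • E42 = u := by
  rw [hol, Submodule.mem_span_pair]


lemma br_E42 (x : Fin 3 → ℝ) : αH x * E42 - E42 * αH x = (x 0) • (E42 - E41) := by
  ext i j
  fin_cases i <;> fin_cases j <;>
    simp [E41_eq, E42_eq, αH, Matrix.mul_apply, Fin.sum_univ_four, Matrix.vecHead, Matrix.vecTail]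

lemma br_E41 (x : Fin 3 → ℝ) : αH x * E41 - E41 * αH x = (x 0) • (E41 - E42) := by
  ext i j
  fin_cases i <;> fin_cases j <;>
    simp [E41_eq, E42_eq, αH, Matrix.mul_apply, Fin.sum_univ_four, Matrix.vecHead, Matrix.vecTail]

lemma abelian_aux (a b c d : ℝ) :
    (a • E41 + b • E42) * (c • E41 + d • E42) - (c • E41 + d • E42) * (a • E41 + b • E42) = 0 := by
  ext i j
  fin_cases i <;> fin_cases j <;>
    simp [E41_eq, E42_eq, Matrix.mul_apply, Fin.sum_univ_four, Matrix.vecHead, Matrix.vecTail]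

lemma curv_aux (x y : Fin 3 → ℝ) :
    (0:ℝ) • E41 + (2 * (x 0 * y 1 - x 1 * y 0)) • E42
      = αH x * αH y - αH y * αH x - αH (heisBr x y) := by
  ext i j
  fin_cases i <;> fin_cases j <;>
    simp [E41_eq, E42_eq, αH, heisBr, Matrix.mul_apply, Fin.sum_univ_four,
      Matrix.vecHead, Matrix.vecTail] <;> ring

theorem stmt16 :
    -- 𝔥 is abelian (under the commutator bracket)
    (∀ u ∈ hol, ∀ v ∈ hol, u * v - v * u = 0) ∧
    -- 𝔥 consists of trace-free matrices, i.e. lies in 𝔰𝔩(4,ℝ)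
    (∀ u ∈ hol, u.trace = 0) ∧
    -- 𝔥 contains all curvature values
    (∀ x y : Fin 3 → ℝ, αH x * αH y - αH y * αH x - αH (heisBr x y) ∈ hol) ∧
    -- 𝔥 is invariant under ad(α(x)), with the explicit bracket formulas
    (∀ x : Fin 3 → ℝ, αH x * E42 - E42 * αH x = (x 0) • (E42 - E41)) ∧
    (∀ x : Fin 3 → ℝ, αH x * E41 - E41 * αH x = (x 0) • (E41 - E42)) := by
  refine ⟨?_, ?_, ?_, br_E42, br_E41⟩
  · intro u hu v hv
    obtain ⟨a, b, rfl⟩ := (hol_mem_iff u).1 hu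
    obtain ⟨c, d, rfl⟩ := (hol_mem_iff v).1 hv
    exact abelian_aux a b c d
  · intro u hu
    obtain ⟨a, b, rfl⟩ := (hol_mem_iff u).1 hu
    simp [E41, E42, Matrix.trace, Matrix.diag, Fin.sum_univ_four, Matrix.single]
  · intro x y
    exact (hol_mem_iff _).2 ⟨0, 2 * (x 0 * y 1 - x 1 * y 0), curv_aux x y⟩
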